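/- For any binary-input memoryless symmetric channel W with uniform input, the mutual information (channel capacity) is upper bounded by the TV-information: C(W) = I(X;Y) ≤ T(W), where I is mutual information in bits, X is uniform on {0,1}, Y is the channel output, and T(W) = 2·V(p_{XY}, p_X p_Y). -/

import Mathlib

open Real

/-- Key scalar inequality: binary entropy deficit vs TV, via convexity. -/
lemma key_convex (α : ℝ) (h1 : 1/2 ≤ α) (h2 : α ≤ 1) :
    α * Real.log α + (1 - α) * Real.log (1 - α) + (2 - 2*α) * Real.log 2 ≤ 0 := by
  have c1 : ConvexOn ℝ (Set.Icc (0:ℝ) 1) (fun x => x * Real.log x) :=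
    Real.convexOn_mul_log.subset (fun x hx => hx.1) (convex_Icc 0 1)
  have c2 : ConvexOn ℝ (Set.Icc (0:ℝ) 1) (fun x => (1-x) * Real.log (1-x)) := by
    refine ⟨convex_Icc 0 1, fun x hx y hy a b ha hb hab => ?_⟩
    have hx' : (1:ℝ) - x ∈ Set.Icc (0:ℝ) 1 := ⟨by linarith [hx.2], by linarith [hx.1]⟩
    have hy' : (1:ℝ) - y ∈ Set.Icc (0:ℝ) 1 := ⟨by linarith [hy.2], by linarith [hy.1]⟩
    have h := c1.2 hx' hy' ha hb hab
    simp only [smul_eq_mul] at h ⊢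
    have e : 1 - (a*x + b*y) = a*(1-x) + b*(1-y) := by linear_combination -hab
    rw [e]; exact h
  have c3 : ConvexOn ℝ (Set.Icc (0:ℝ) 1) (fun x => (2-2*x) * Real.log 2) := by
    refine ⟨convex_Icc 0 1, fun x hx y hy a b ha hb hab => ?_⟩
    simp only [smul_eq_mul]
    have e : (2 - 2*(a*x+b*y)) = a*(2-2*x) + b*(2-2*y) := by linear_combination (-2 : ℝ)*hab
    rw [e]; exact le_of_eq (by ring)
  have hc : ConvexOn ℝ (Set.Icc (0:ℝ) 1)
      (fun x => x * Real.log x + (1-x) * Real.log (1-x) + (2-2*x) * Real.log 2) :=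
    (c1.add c2).add c3
  have hseg : α ∈ segment ℝ (1/2 : ℝ) 1 := by
    rw [segment_eq_Icc (by norm_num : (1/2:ℝ) ≤ 1)]; exact ⟨h1, h2⟩
  have hmax := hc.le_on_segment (x := 1/2) (y := 1)
      ⟨by norm_num, by norm_num⟩ ⟨by norm_num, le_refl 1⟩ hseg
  have f1 : (1/2 : ℝ) * Real.log (1/2) + (1-(1/2:ℝ)) * Real.log (1-(1/2:ℝ))
      + (2-2*(1/2:ℝ)) * Real.log 2 = 0 := by
    rw [show (1:ℝ)-1/2 = 1/2 by norm_num, show (2:ℝ)-2*(1/2) = 1 by norm_num,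
      show (1:ℝ)/2 = 2⁻¹ by norm_num, Real.log_inv]
    ring
  have f2 : (1 : ℝ) * Real.log 1 + (1-(1:ℝ)) * Real.log (1-(1:ℝ))
      + (2-2*(1:ℝ)) * Real.log 2 = 0 := by norm_num
  rw [f1, f2, max_self] at hmax
  exact hmax

/-- pointwise inequality when b ≤ a. -/
lemma point_ord (a b : ℝ) (hb : 0 ≤ b) (hba : b ≤ a) :
    (1/2 : ℝ) * a * Real.logb 2 (((1/2) * a) / ((1/2) * ((1/2) * (a + b)))) +
    (1/2 : ℝ) * b * Real.logb 2 (((1/2) * b) / ((1/2) * ((1/2) * (a + b)))) ≤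
    |(1/2 : ℝ) * a - (1/2) * ((1/2) * (a + b))| + |(1/2 : ℝ) * b - (1/2) * ((1/2) * (a + b))| := by
  have ha : 0 ≤ a := le_trans hb hba
  rcases eq_or_lt_of_le ha with ha0 | ha0
  · -- a = 0, hence b = 0
    have hb0 : b = 0 := le_antisymm (by linarith) hb
    rw [← ha0, hb0]; norm_num
  have hspos : 0 < a + b := by linarith
  have habs1 : |(1/2 : ℝ) * a - (1/2) * ((1/2) * (a + b))| = (a - b)/4 := by
    rw [abs_of_nonneg (by linarith)]; ring
  have habs2 : |(1/2 : ℝ) * b - (1/2) * ((1/2) * (a + b))| = (a - b)/4 := by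
    rw [abs_of_nonpos (by linarith)]; ring
  rw [habs1, habs2]
  have hL2 : (0:ℝ) < Real.log 2 := Real.log_pos (by norm_num)
  rcases eq_or_lt_of_le hb with hb0 | hb0
  · -- b = 0
    rw [← hb0]
    have e1 : ((1/2 : ℝ) * a) / ((1/2) * ((1/2) * (a + 0))) = 2 := by
      field_simp; ring
    rw [e1, Real.logb_self_eq_one (by norm_num : (1:ℝ) < 2)]
    norm_num
    linarith
  · -- b > 0
    have hα1 : 1/2 ≤ a / (a + b) := by
      rw [le_div_iff₀ hspos]; linarith
    have hα2 : a / (a + b) ≤ 1 := by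
      rw [div_le_one hspos]; linarith
    have hkey := key_convex (a / (a + b)) hα1 hα2
    have e1mα : 1 - a / (a + b) = b / (a + b) := by field_simp; ring
    have hlogα : Real.log (a / (a + b)) = Real.log a - Real.log (a + b) :=
      Real.log_div (by positivity) hspos.ne'
    have hlogβ : Real.log (1 - a / (a + b)) = Real.log b - Real.log (a + b) := by
      rw [e1mα]; exact Real.log_div (by positivity) hspos.ne'
    rw [hlogα, hlogβ] at hkey
    have hkey' : a * Real.log a + b * Real.log b - (a + b) * Real.log (a + b)
        + 2 * b * Real.log 2 ≤ 0 := by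
      have hms := mul_nonpos_of_nonneg_of_nonpos (le_of_lt hspos) hkey
      have hexp : (a + b) * (a / (a + b) * (Real.log a - Real.log (a + b))
          + (1 - a / (a + b)) * (Real.log b - Real.log (a + b))
          + (2 - 2*(a / (a + b))) * Real.log 2)
          = a * Real.log a + b * Real.log b - (a + b) * Real.log (a + b)
            + 2 * b * Real.log 2 := by
        field_simp
        ring
      rw [hexp] at hms
      exact hms
    have la : Real.logb 2 (((1/2 : ℝ) * a) / ((1/2) * ((1/2) * (a + b))))
        = (Real.log 2 + Real.log a - Real.log (a + b)) / Real.log 2 := by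
      rw [show ((1/2 : ℝ) * a) / ((1/2) * ((1/2) * (a + b))) = 2 * a / (a + b) by
        field_simp]
      rw [Real.logb, Real.log_div (by positivity) hspos.ne',
        Real.log_mul (by norm_num) ha0.ne']
    have lb : Real.logb 2 (((1/2 : ℝ) * b) / ((1/2) * ((1/2) * (a + b))))
        = (Real.log 2 + Real.log b - Real.log (a + b)) / Real.log 2 := by
      rw [show ((1/2 : ℝ) * b) / ((1/2) * ((1/2) * (a + b))) = 2 * b / (a + b) by
        field_simp]
      rw [Real.logb, Real.log_div (by positivity) hspos.ne',
        Real.log_mul (by norm_num) hb0.ne']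
    rw [la, lb]
    have hexp2 : (1/2 : ℝ) * a * ((Real.log 2 + Real.log a - Real.log (a + b)) / Real.log 2)
        + (1/2 : ℝ) * b * ((Real.log 2 + Real.log b - Real.log (a + b)) / Real.log 2)
        = (a * (Real.log 2 + Real.log a - Real.log (a + b))
          + b * (Real.log 2 + Real.log b - Real.log (a + b))) / (2 * Real.log 2) := by
      field_simp
    rw [hexp2, div_le_iff₀ (by positivity)]
    nlinarith [hkey']

/-- pointwise inequality, general. -/
lemma point (a b : ℝ) (ha : 0 ≤ a) (hb : 0 ≤ b) :
    (1/2 : ℝ) * a * Real.logb 2 (((1/2) * a) / ((1/2) * ((1/2) * (a + b)))) +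
    (1/2 : ℝ) * b * Real.logb 2 (((1/2) * b) / ((1/2) * ((1/2) * (a + b)))) ≤
    |(1/2 : ℝ) * a - (1/2) * ((1/2) * (a + b))| + |(1/2 : ℝ) * b - (1/2) * ((1/2) * (a + b))| := by
  rcases le_total b a with h | h
  · exact point_ord a b hb h
  · have := point_ord b a ha h
    rw [add_comm b a] at this
    linarith

/-- The symmetric capacity (mutual information with uniform input, in bits) of a
binary-input channel is bounded above by its TV-information. -/
theorem stmt_10 {Y : Type*} [Fintype Y] (W : Bool → Y → ℝ)
    (hW0 : ∀ x y, 0 ≤ W x y) (hW1 : ∀ x, ∑ y, W x y = 1) :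
    ∑ x : Bool, ∑ y, (1/2 : ℝ) * W x y *
        Real.logb 2 (((1/2) * W x y) / ((1/2) * ((1/2) * (W false y + W true y)))) ≤
    ∑ x : Bool, ∑ y, |(1/2 : ℝ) * W x y - (1/2) * ((1/2) * (W false y + W true y))| := by
  conv_lhs => rw [Finset.sum_comm]
  conv_rhs => rw [Finset.sum_comm]
  apply Finset.sum_le_sum
  intro y _
  rw [Fintype.sum_bool, Fintype.sum_bool]
  have := point (W false y) (W true y) (hW0 false y) (hW0 true y)
  linarith
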